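/- Let f : ℝ² → ℝ, f(x,y) = y(x²y² + 3xy + 3). Then S_{(0,1)}(f) ≠ ∅, i.e., there exists t₀ ∈ ℝ and a sequence (p_j) in the Milnor set M_{(0,1)}(f) with ‖p_j‖ → ∞ and f(p_j) → t₀. In particular S_{(0,0)}(f) ≠ S_{(0,1)}(f), since S_{(0,0)}(f) = ∅. -/

import Mathlib

open Filter Topology Set

noncomputable section

/-- `f(x,y) = y(x²y² + 3xy + 3) = x²y³ + 3xy² + 3y`. -/
def fEx (p : EuclideanSpace ℝ (Fin 2)) : ℝ :=
  (p 0) ^ 2 * (p 1) ^ 3 + 3 * (p 0) * (p 1) ^ 2 + 3 * (p 1)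

/-- The Milnor set `M_a(f)`: points where `grad f(p)` and `p - a` are linearly dependent. -/
def MilnorEx (a : EuclideanSpace ℝ (Fin 2)) : Set (EuclideanSpace ℝ (Fin 2)) :=
  {p | ¬ LinearIndependent ℝ ![gradient fEx p, p - a]}

/-- `S_a(f)`: finite limits of `f` along sequences in `M_a(f)` going to infinity in norm. -/
def SaEx (a : EuclideanSpace ℝ (Fin 2)) : Set ℝ :=
  {c | ∃ x : ℕ → EuclideanSpace ℝ (Fin 2), (∀ j, x j ∈ MilnorEx a) ∧
    Tendsto (fun j => ‖x j‖) atTop atTop ∧ Tendsto (fun j => fEx (x j)) atTop (𝓝 c)}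

set_option maxHeartbeats 1000000

lemma fEx_grad' (p : EuclideanSpace ℝ (Fin 2)) :
    HasGradientAt fEx
      (!₂[2*(p 0)*(p 1)^3 + 3*(p 1)^2, 3*(p 0)^2*(p 1)^2 + 6*(p 0)*(p 1) + 3] :
        EuclideanSpace ℝ (Fin 2)) p := by
  have h0 : HasFDerivAt (fun q : EuclideanSpace ℝ (Fin 2) => q 0)
      (EuclideanSpace.proj (𝕜 := ℝ) (0 : Fin 2)) p :=
    (EuclideanSpace.proj (𝕜 := ℝ) (0 : Fin 2)).hasFDerivAt
  have h1 : HasFDerivAt (fun q : EuclideanSpace ℝ (Fin 2) => q 1)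
      (EuclideanSpace.proj (𝕜 := ℝ) (1 : Fin 2)) p :=
    (EuclideanSpace.proj (𝕜 := ℝ) (1 : Fin 2)).hasFDerivAt
  have hf : HasFDerivAt fEx
      ((2*(p 0)*(p 1)^3 + 3*(p 1)^2) • (EuclideanSpace.proj (𝕜 := ℝ) (0 : Fin 2))
        + (3*(p 0)^2*(p 1)^2 + 6*(p 0)*(p 1) + 3) • (EuclideanSpace.proj (𝕜 := ℝ) (1 : Fin 2))) p := by
    have key := (((h0.mul h0).mul ((h1.mul h1).mul h1)).add
      (((hasFDerivAt_const (3:ℝ) p).mul h0).mul (h1.mul h1))).add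
      ((hasFDerivAt_const (3:ℝ) p).mul h1)
    refine (key.congr_of_eventuallyEq (Eventually.of_forall fun q => ?_)).congr_fderiv ?_
    · simp only [fEx, Pi.add_apply, Pi.mul_apply]; ring
    · ext v
      simp
      ring
  rw [hasGradientAt_iff_hasFDerivAt]
  refine hf.congr_fderiv ?_
  ext v
  simp [InnerProductSpace.toDual_apply_apply, PiLp.inner_apply, Fin.sum_univ_two]
  ring

lemma fEx_grad (p : EuclideanSpace ℝ (Fin 2)) :
    gradient fEx p
      = (!₂[2*(p 0)*(p 1)^3 + 3*(p 1)^2, 3*(p 0)^2*(p 1)^2 + 6*(p 0)*(p 1) + 3] :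
        EuclideanSpace ℝ (Fin 2)) :=
  (fEx_grad' p).gradient

lemma normsq (p : EuclideanSpace ℝ (Fin 2)) : ‖p‖^2 = (p 0)^2 + (p 1)^2 := by
  rw [EuclideanSpace.norm_eq, Real.sq_sqrt (by positivity)]
  simp [Fin.sum_univ_two, sq_abs]

lemma abs_fst_le_norm (p : EuclideanSpace ℝ (Fin 2)) : |p 0| ≤ ‖p‖ := by
  have h := normsq p
  nlinarith [abs_nonneg (p 0), norm_nonneg p, sq_abs (p 0), sq_nonneg (p 1)]

lemma exZ {y : ℝ} (h0 : 0 < y) (h14 : y ≤ 1/4) :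
    ∃ z, -1 < z ∧ z < -1 + y ∧
      -3*z^3 - 6*z^2 + z*(2*y^4 - 2*y^3 - 3) + 3*y^4 - 3*y^3 = 0 := by
  set G : ℝ → ℝ := fun z => -3*z^3 - 6*z^2 + z*(2*y^4 - 2*y^3 - 3) + 3*y^4 - 3*y^3 with hG
  have hc : ContinuousOn G (Icc (-1) (-1+y)) := by
    apply Continuous.continuousOn; fun_prop
  have hab : (-1:ℝ) ≤ -1 + y := by linarith
  have hmem : (0:ℝ) ∈ Ioo (G (-1)) (G (-1+y)) := by
    constructor
    · show G (-1) < 0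
      simp only [hG]
      nlinarith [pow_pos h0 3]
    · show (0:ℝ) < G (-1+y)
      simp only [hG]
      nlinarith [pow_pos h0 2, pow_pos h0 3]
  obtain ⟨z, hz, hGz⟩ := intermediate_value_Ioo hab hc hmem
  exact ⟨z, hz.1, hz.2, hGz⟩

lemma det_of_g {y z : ℝ} (hy : y ≠ 0)
    (hg : -3*z^3 - 6*z^2 + z*(2*y^4 - 2*y^3 - 3) + 3*y^4 - 3*y^3 = 0) :
    (2*(z/y)*y^3+3*y^2)*(y-1) = (3*(z/y)^2*y^2+6*(z/y)*y+3)*(z/y) := by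
  set x := z/y with hxdef
  have hx : x * y = z := div_mul_cancel₀ z hy
  apply mul_right_cancel₀ hy
  linear_combination hg + (-3*((x*y)^2 + x*y*z + z^2) - 6*(x*y+z) + (2*y^4-2*y^3-3)) * hx

lemma fval {y z : ℝ} (hy : y ≠ 0) :
    fEx (!₂[z/y, y] : EuclideanSpace ℝ (Fin 2)) = y*(z^2+3*z+3) := by
  simp only [fEx, Matrix.cons_val_zero, Matrix.cons_val_one, Matrix.head_cons]
  field_simp

lemma mem_milnor_one (x y : ℝ) (hy1 : y ≠ 1)
    (hdet : (2*x*y^3+3*y^2)*(y-1) = (3*x^2*y^2+6*x*y+3)*x) :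
    (!₂[x,y] : EuclideanSpace ℝ (Fin 2)) ∈ MilnorEx (!₂[0,1] : EuclideanSpace ℝ (Fin 2)) := by
  show ¬ LinearIndependent ℝ
    ![gradient fEx (!₂[x,y] : EuclideanSpace ℝ (Fin 2)),
      (!₂[x,y] : EuclideanSpace ℝ (Fin 2)) - (!₂[0,1] : EuclideanSpace ℝ (Fin 2))]
  rw [linearIndependent_fin2]
  push_neg
  intro _
  refine ⟨(3*x^2*y^2+6*x*y+3)/(y-1), ?_⟩
  simp only [Matrix.cons_val_zero, Matrix.cons_val_one, Matrix.head_cons]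
  rw [fEx_grad]
  have h1 : y - 1 ≠ 0 := sub_ne_zero.mpr hy1
  ext i
  fin_cases i <;>
    simp only [PiLp.smul_apply, PiLp.sub_apply, PiLp.toLp_apply, smul_eq_mul, Matrix.cons_val_zero,
      Matrix.cons_val_one, Matrix.head_cons, Fin.isValue, Fin.zero_eta, Fin.mk_one]
  · field_simp
    linear_combination -hdet
  · field_simp

lemma zero_mem_SaEx_one : (0:ℝ) ∈ SaEx (!₂[0, 1] : EuclideanSpace ℝ (Fin 2)) := by
  have hy0 : ∀ j : ℕ, (0:ℝ) < 1/((j:ℝ)+4) := fun j => by positivity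
  have hy14 : ∀ j : ℕ, 1/((j:ℝ)+4) ≤ 1/4 := fun j => by
    rw [div_le_div_iff₀ (by positivity) (by norm_num)]
    have : (0:ℝ) ≤ (j:ℝ) := Nat.cast_nonneg j
    linarith
  choose Z hZ1 hZ2 hZ0 using fun j : ℕ => exZ (hy0 j) (hy14 j)
  refine ⟨fun j => !₂[Z j / (1/((j:ℝ)+4)), 1/((j:ℝ)+4)], ?_, ?_, ?_⟩
  · intro j
    apply mem_milnor_one
    · have := hy14 j; intro h; rw [h] at this; norm_num at this
    · exact det_of_g (ne_of_gt (hy0 j)) (hZ0 j)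
  · apply tendsto_atTop_mono _ tendsto_natCast_atTop_atTop
    intro j
    have hy := hy0 j
    have hy' := hy14 j
    have hzb : Z j < -(3/4) := by have := hZ2 j; linarith
    have h1 := abs_fst_le_norm (!₂[Z j / (1/((j:ℝ)+4)), 1/((j:ℝ)+4)] : EuclideanSpace ℝ (Fin 2))
    rw [show ((!₂[Z j / (1/((j:ℝ)+4)), 1/((j:ℝ)+4)] : EuclideanSpace ℝ (Fin 2)) 0) = Z j / (1/((j:ℝ)+4)) from rfl] at h1
    refine le_trans ?_ h1
    rw [abs_div, abs_of_pos hy, abs_of_neg (by linarith : Z j < 0), le_div_iff₀ hy]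
    have hZlow : 1 - 1/((j:ℝ)+4) < -Z j := by have := hZ2 j; linarith
    have hpos : (0:ℝ) < (j:ℝ)+4 := by positivity
    have hjy : (j:ℝ) * (1/((j:ℝ)+4)) ≤ 1 - 1/((j:ℝ)+4) := by
      rw [← sub_nonneg]
      field_simp
      linarith
    linarith
  · apply squeeze_zero_norm (a := fun j : ℕ => 3/((j:ℝ)+4))
    · intro j
      have hy := hy0 j
      rw [fval (ne_of_gt hy)]
      have h1 := hZ1 j
      have h2 : Z j < 0 := by have := hZ2 j; have := hy14 j; linarith
      have hs1 : 0 < (Z j)^2 + 3*(Z j) + 3 := by nlinarith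
      have hs2 : (Z j)^2 + 3*(Z j) + 3 ≤ 3 := by nlinarith
      have hc : (0:ℝ) < (j:ℝ)+4 := by positivity
      rw [Real.norm_eq_abs, abs_mul, abs_of_pos hy, abs_of_pos hs1]
      rw [show (1/((j:ℝ)+4)) * ((Z j)^2 + 3*(Z j) + 3) = ((Z j)^2 + 3*(Z j) + 3)/((j:ℝ)+4) by ring,
        div_le_div_iff₀ hc hc]
      nlinarith [hs2]
    · apply Tendsto.div_atTop (tendsto_const_nhds)
      exact tendsto_atTop_add_const_right _ 4 tendsto_natCast_atTop_atTop

lemma key (p : EuclideanSpace ℝ (Fin 2)) (hp : p ∈ MilnorEx 0) (hn : 3 ≤ ‖p‖) :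
    1/2 ≤ |fEx p| := by
  rw [MilnorEx, mem_setOf_eq, linearIndependent_fin2] at hp
  push_neg at hp
  simp only [Matrix.cons_val_one, Matrix.head_cons, Matrix.cons_val_zero, sub_zero] at hp
  set x := p 0 with hx
  set y := p 1 with hy
  have hn2 : (9:ℝ) ≤ x^2 + y^2 := by
    have := normsq p
    nlinarith [norm_nonneg p]
  have hdet : (2*x*y^3 + 3*y^2) * y = (3*x^2*y^2 + 6*x*y + 3) * x := by
    rcases eq_or_ne p 0 with hp0 | hp0
    · exfalso
      have h0 : x = 0 := by rw [hx, hp0]; rfl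
      have h1 : y = 0 := by rw [hy, hp0]; rfl
      rw [h0, h1] at hn2; norm_num at hn2
    · obtain ⟨c, hc⟩ := hp hp0
      rw [fEx_grad] at hc
      have h0 := congrArg (· 0) hc
      have h1 := congrArg (· 1) hc
      simp only [PiLp.smul_apply, PiLp.toLp_apply, smul_eq_mul, Matrix.cons_val_zero, Matrix.cons_val_one,
        Matrix.head_cons] at h0 h1
      rw [← hx, ← hy] at h0 h1
      linear_combination x*h1 - y*h0
  have hxne : x ≠ 0 := by
    intro h0
    rw [h0] at hdet
    have hy3 : y^3 = 0 := by nlinarith [hdet]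
    have hy0 : y = 0 := by
      exact pow_eq_zero_iff (by norm_num) |>.mp hy3
    rw [h0, hy0] at hn2; norm_num at hn2
  have hyne : y ≠ 0 := by
    intro h0
    rw [h0] at hdet
    have hx0 : x = 0 := by nlinarith [hdet]
    exact hxne hx0
  have E1 : 3*(x*y)*((x*y)+1)^2 = y^4*(2*(x*y)+3) := by linear_combination (-y) * hdet
  have E2 : (x*y)^3*(2*(x*y)+3) = 3*x^4*((x*y)+1)^2 := by linear_combination x^3 * hdet
  set u := x * y with hu
  have hune : u ≠ 0 := mul_ne_zero hxne hyne
  have hs : (3:ℝ)/4 ≤ u^2 + 3*u + 3 := by nlinarith [sq_nonneg (2*u+3)]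
  have hfeq : fEx p = y * (u^2 + 3*u + 3) := by
    simp only [fEx, ← hx, ← hy, hu]; ring
  rw [hfeq]
  rcases lt_or_gt_of_ne hune with hult | hugt
  · -- u < 0
    have hx4 : 0 < x^4 := by positivity
    have hy4 : 0 < y^4 := by positivity
    have hu3neg : u^3 < 0 := by
      nlinarith [mul_pos (mul_pos (neg_pos.mpr hult) (neg_pos.mpr hult)) (neg_pos.mpr hult)]
    have h2u3 : 2*u + 3 ≤ 0 := by
      nlinarith [E2, hu3neg, mul_nonneg (le_of_lt hx4) (sq_nonneg (u+1))]
    have hup : 3*(u+1)^2 < 2*y^4 := by nlinarith [E1, hy4]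
    have hu14 : (1:ℝ)/4 ≤ (u+1)^2 := by nlinarith
    have hy38 : (3:ℝ)/8 < y^4 := by nlinarith
    have hy06 : (3:ℝ)/5 ≤ y^2 := by nlinarith [sq_nonneg y]
    have hss : (9:ℝ)/16 ≤ (u^2+3*u+3)^2 := by nlinarith
    have h2 : (27:ℝ)/80 ≤ y^2 * (u^2+3*u+3)^2 :=
      le_trans (by norm_num) (mul_le_mul hy06 hss (by norm_num) (by positivity))
    nlinarith [abs_nonneg (y * (u^2+3*u+3)), sq_abs (y * (u^2+3*u+3))]
  · -- u > 0
    have huy4 : u ≤ y^4 := by nlinarith [E1, sq_nonneg (u+1)]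
    have hxy : x^2 ≤ y^6 := by
      have h1 : u^2 ≤ y^8 := by nlinarith
      have h2 : x^2*y^2 = u^2 := by rw [hu]; ring
      have hy2 : 0 < y^2 := by positivity
      nlinarith
    have hy21 : 1 ≤ y^2 := by nlinarith
    have hs3 : (3:ℝ) ≤ u^2+3*u+3 := by nlinarith
    have hss : (9:ℝ) ≤ (u^2+3*u+3)^2 := by nlinarith
    have h2 : (9:ℝ) ≤ y^2 * (u^2+3*u+3)^2 :=
      le_trans (by norm_num) (mul_le_mul hy21 hss (by norm_num) (by positivity))
    nlinarith [abs_nonneg (y * (u^2+3*u+3)), sq_abs (y * (u^2+3*u+3))]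

/-- For `f(x,y) = y(x²y² + 3xy + 3)`, one has `S_{(0,1)}(f) ≠ ∅`; in particular
`S_{(0,1)}(f) ≠ S_{(0,0)}(f)`, since `S_{(0,0)}(f) = ∅`. -/
theorem SaEx_zero_one_nonempty :
    (SaEx (!₂[0, 1] : EuclideanSpace ℝ (Fin 2))).Nonempty ∧
    SaEx (!₂[0, 1] : EuclideanSpace ℝ (Fin 2)) ≠ SaEx (0 : EuclideanSpace ℝ (Fin 2)) := by
  have h0 : (0:ℝ) ∈ SaEx (!₂[0, 1] : EuclideanSpace ℝ (Fin 2)) := zero_mem_SaEx_one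
  refine ⟨⟨0, h0⟩, ?_⟩
  intro heq
  rw [heq] at h0
  obtain ⟨x, hmem, hnorm, hlim⟩ := h0
  have hA : ∀ᶠ j in atTop, (3:ℝ) ≤ ‖x j‖ := hnorm.eventually_ge_atTop 3
  have hB : ∀ᶠ j in atTop, |fEx (x j)| < 1/2 := by
    have := NormedAddCommGroup.tendsto_nhds_zero.mp hlim (1/2) (by norm_num)
    simpa [Real.norm_eq_abs] using this
  obtain ⟨j, h3, hlt⟩ := (hA.and hB).exists
  have := key (x j) (hmem j) h3
  linarith
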